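/- Let μ and ν be probability measures on a measurable space, both absolutely continuous with respect to a σ-finite measure μ₀, and let f be a measurable real-valued function that is square-integrable with respect to both μ and ν. Then |∫ f dμ − ∫ f dν| ≤ 2·(∫ f² dμ + ∫ f² dν)^{1/2}·d_Hell(μ, ν). -/

import Mathlib

open MeasureTheory Real

lemma my_cauchy_schwarz {X : Type*} [MeasurableSpace X] {μ : Measure X} {g h : X → ℝ}
    (hg : MemLp g 2 μ) (hh : MemLp h 2 μ) :
    |∫ x, g x * h x ∂μ| ≤ Real.sqrt (∫ x, g x ^ 2 ∂μ) * Real.sqrt (∫ x, h x ^ 2 ∂μ) := by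
  have h22 : (2 : ℝ).HolderConjugate 2 := Real.HolderConjugate.two_two
  have hg' : MemLp g (ENNReal.ofReal 2) μ := by simpa [ENNReal.ofReal_ofNat] using hg
  have hh' : MemLp h (ENNReal.ofReal 2) μ := by simpa [ENNReal.ofReal_ofNat] using hh
  have key := integral_mul_norm_le_Lp_mul_Lq h22 hg' hh'
  calc |∫ x, g x * h x ∂μ| ≤ ∫ x, ‖g x * h x‖ ∂μ := by
        simpa using norm_integral_le_integral_norm (fun x => g x * h x) (μ := μ)
    _ = ∫ x, ‖g x‖ * ‖h x‖ ∂μ := by simp [norm_mul]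
    _ ≤ (∫ a, ‖g a‖ ^ (2:ℝ) ∂μ) ^ ((1:ℝ) / 2) * (∫ a, ‖h a‖ ^ (2:ℝ) ∂μ) ^ ((1:ℝ) / 2) := key
    _ = Real.sqrt (∫ x, g x ^ 2 ∂μ) * Real.sqrt (∫ x, h x ^ 2 ∂μ) := by
        rw [Real.sqrt_eq_rpow, Real.sqrt_eq_rpow]
        congr 2 <;> · apply integral_congr_ae; filter_upwards with x
                      rw [show (2:ℝ) = ((2:ℕ):ℝ) by norm_num, Real.rpow_natCast]
                      simp [sq_abs]

/-- The Hellinger distance between `μ` and `ν`, both absolutely continuous with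
respect to the reference measure `μ₀`, computed via Radon–Nikodym derivatives. -/
noncomputable def dHell {X : Type*} [MeasurableSpace X] (μ₀ μ ν : Measure X) : ℝ :=
  Real.sqrt ((1 / 2) * ∫ u,
    (Real.sqrt ((μ.rnDeriv μ₀ u).toReal) - Real.sqrt ((ν.rnDeriv μ₀ u).toReal)) ^ 2 ∂μ₀)

/-- Hellinger distance controls differences of expectations of square-integrable
functionals. -/
theorem abs_integral_sub_le_hellinger {X : Type*} [MeasurableSpace X]
    (μ₀ μ ν : Measure X) [SigmaFinite μ₀]
    [IsProbabilityMeasure μ] [IsProbabilityMeasure ν]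
    (hμ : μ ≪ μ₀) (hν : ν ≪ μ₀)
    (f : X → ℝ) (hfm : Measurable f)
    (hf2μ : Integrable (fun x => f x ^ 2) μ)
    (hf2ν : Integrable (fun x => f x ^ 2) ν) :
    |(∫ x, f x ∂μ) - ∫ x, f x ∂ν|
      ≤ 2 * Real.sqrt ((∫ x, f x ^ 2 ∂μ) + ∫ x, f x ^ 2 ∂ν) * dHell μ₀ μ ν := by
  set p : X → ℝ := fun x => (μ.rnDeriv μ₀ x).toReal with hp
  set q : X → ℝ := fun x => (ν.rnDeriv μ₀ x).toReal with hq
  have hpm : Measurable p := (Measure.measurable_rnDeriv μ μ₀).ennreal_toReal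
  have hqm : Measurable q := (Measure.measurable_rnDeriv ν μ₀).ennreal_toReal
  have hp0 : ∀ x, 0 ≤ p x := fun x => ENNReal.toReal_nonneg
  have hq0 : ∀ x, 0 ≤ q x := fun x => ENNReal.toReal_nonneg
  have hfμ : Integrable f μ :=
    ((memLp_two_iff_integrable_sq hfm.aestronglyMeasurable).mpr hf2μ).integrable one_le_two
  have hfν : Integrable f ν :=
    ((memLp_two_iff_integrable_sq hfm.aestronglyMeasurable).mpr hf2ν).integrable one_le_two
  -- integrability over μ₀
  have ipf : Integrable (fun x => p x * f x) μ₀ := by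
    simpa [smul_eq_mul] using (integrable_rnDeriv_smul_iff hμ).mpr hfμ
  have iqf : Integrable (fun x => q x * f x) μ₀ := by
    simpa [smul_eq_mul] using (integrable_rnDeriv_smul_iff hν).mpr hfν
  have ipf2 : Integrable (fun x => p x * f x ^ 2) μ₀ := by
    simpa [smul_eq_mul] using (integrable_rnDeriv_smul_iff hμ).mpr hf2μ
  have iqf2 : Integrable (fun x => q x * f x ^ 2) μ₀ := by
    simpa [smul_eq_mul] using (integrable_rnDeriv_smul_iff hν).mpr hf2ν
  have ip : Integrable p μ₀ := Measure.integrable_toReal_rnDeriv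
  have iq : Integrable q μ₀ := Measure.integrable_toReal_rnDeriv
  set g : X → ℝ := fun x => f x * (Real.sqrt (p x) + Real.sqrt (q x)) with hgdef
  set h : X → ℝ := fun x => Real.sqrt (p x) - Real.sqrt (q x) with hhdef
  have hgm : Measurable g := hfm.mul (hpm.sqrt.add hqm.sqrt)
  have hhm : Measurable h := hpm.sqrt.sub hqm.sqrt
  -- pointwise bounds
  have hb : ∀ x, h x ^ 2 ≤ 2 * (p x + q x) := by
    intro x
    have := Real.sq_sqrt (hp0 x); have := Real.sq_sqrt (hq0 x)
    simp only [hhdef]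
    nlinarith [sq_nonneg (Real.sqrt (p x) + Real.sqrt (q x))]
  have gb : ∀ x, g x ^ 2 ≤ 2 * (p x * f x ^ 2 + q x * f x ^ 2) := by
    intro x
    have := Real.sq_sqrt (hp0 x); have := Real.sq_sqrt (hq0 x)
    simp only [hgdef]
    nlinarith [sq_nonneg (Real.sqrt (p x) - Real.sqrt (q x)), sq_nonneg (f x),
      mul_nonneg (sq_nonneg (f x)) (sq_nonneg (Real.sqrt (p x) - Real.sqrt (q x)))]
  have ih2 : Integrable (fun x => h x ^ 2) μ₀ := by
    refine ((ip.add iq).const_mul 2).mono ((hhm.pow_const 2).aestronglyMeasurable)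
      (Filter.Eventually.of_forall fun x => ?_)
    simp only [Pi.add_apply]
    have h1 : (0:ℝ) ≤ 2 * (p x + q x) := by linarith [hp0 x, hq0 x]
    rw [Real.norm_of_nonneg (sq_nonneg _), Real.norm_of_nonneg h1]
    exact hb x
  have ig2 : Integrable (fun x => g x ^ 2) μ₀ := by
    refine ((ipf2.add iqf2).const_mul 2).mono ((hgm.pow_const 2).aestronglyMeasurable)
      (Filter.Eventually.of_forall fun x => ?_)
    simp only [Pi.add_apply]
    have h1 : (0:ℝ) ≤ 2 * (p x * f x ^ 2 + q x * f x ^ 2) := by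
      have := mul_nonneg (hp0 x) (sq_nonneg (f x))
      have := mul_nonneg (hq0 x) (sq_nonneg (f x))
      linarith
    rw [Real.norm_of_nonneg (sq_nonneg _), Real.norm_of_nonneg h1]
    exact gb x
  have hgL2 : MemLp g 2 μ₀ := (memLp_two_iff_integrable_sq hgm.aestronglyMeasurable).mpr ig2
  have hhL2 : MemLp h 2 μ₀ := (memLp_two_iff_integrable_sq hhm.aestronglyMeasurable).mpr ih2
  -- the difference of integrals as an integral over μ₀
  have step1 : (∫ x, f x ∂μ) - ∫ x, f x ∂ν = ∫ x, g x * h x ∂μ₀ := by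
    rw [← integral_rnDeriv_smul hμ (f := f), ← integral_rnDeriv_smul hν (f := f),
      ← integral_sub (by simpa [smul_eq_mul] using ipf) (by simpa [smul_eq_mul] using iqf)]
    refine integral_congr_ae (Filter.Eventually.of_forall fun x => ?_)
    have hp' := Real.sq_sqrt (hp0 x); have hq' := Real.sq_sqrt (hq0 x)
    simp only [smul_eq_mul, hgdef, hhdef]
    show p x * f x - q x * f x =
      f x * (Real.sqrt (p x) + Real.sqrt (q x)) * (Real.sqrt (p x) - Real.sqrt (q x))
    linear_combination f x * hq' - f x * hp'
  -- bounds on the two L2 norms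
  set A : ℝ := (∫ x, f x ^ 2 ∂μ) + ∫ x, f x ^ 2 ∂ν with hA
  have intg2 : ∫ x, g x ^ 2 ∂μ₀ ≤ 2 * A := by
    have := integral_mono ig2 ((ipf2.add iqf2).const_mul 2) gb
    calc ∫ x, g x ^ 2 ∂μ₀ ≤ ∫ x, 2 * (p x * f x ^ 2 + q x * f x ^ 2) ∂μ₀ := this
      _ = 2 * A := by
          rw [integral_const_mul, integral_add ipf2 iqf2, hA]
          congr 2
          · simpa [smul_eq_mul] using integral_rnDeriv_smul hμ (f := fun x => f x ^ 2)
          · simpa [smul_eq_mul] using integral_rnDeriv_smul hν (f := fun x => f x ^ 2)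
  have hA0 : 0 ≤ A := by
    have h1 : 0 ≤ ∫ x, f x ^ 2 ∂μ := integral_nonneg fun x => sq_nonneg _
    have h2 : 0 ≤ ∫ x, f x ^ 2 ∂ν := integral_nonneg fun x => sq_nonneg _
    linarith
  have sqg : Real.sqrt (∫ x, g x ^ 2 ∂μ₀) ≤ Real.sqrt 2 * Real.sqrt A := by
    rw [← Real.sqrt_mul (by norm_num : (0:ℝ) ≤ 2)]
    exact Real.sqrt_le_sqrt intg2
  have sqh : Real.sqrt (∫ x, h x ^ 2 ∂μ₀) = Real.sqrt 2 * dHell μ₀ μ ν := by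
    rw [dHell, ← Real.sqrt_mul (by norm_num : (0:ℝ) ≤ 2)]
    congr 1
    ring
  have hd0 : 0 ≤ dHell μ₀ μ ν := Real.sqrt_nonneg _
  have cs := my_cauchy_schwarz hgL2 hhL2
  rw [step1]
  calc |∫ x, g x * h x ∂μ₀|
      ≤ Real.sqrt (∫ x, g x ^ 2 ∂μ₀) * Real.sqrt (∫ x, h x ^ 2 ∂μ₀) := cs
    _ ≤ (Real.sqrt 2 * Real.sqrt A) * (Real.sqrt 2 * dHell μ₀ μ ν) := by
        rw [sqh]
        exact mul_le_mul_of_nonneg_right sqg (by positivity)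
    _ = 2 * Real.sqrt A * dHell μ₀ μ ν := by
        have : Real.sqrt 2 * Real.sqrt 2 = 2 := Real.mul_self_sqrt (by norm_num)
        linear_combination Real.sqrt A * dHell μ₀ μ ν * this
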